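/- Let X be a Busemann space, C ⊆ X nonempty, and T:C→C λ-firmly nonexpansive for some λ ∈ (0,1). Then any periodic point of T is a fixed point of T: if T^{m+1}x = x for some m ≥ 0, then Tx = x. -/

import Mathlib

open Metric Set

/-- A geodesic segment in a metric space joining `x` and `y`: the image of an
isometric embedding of a real interval sending the endpoints to `x` and `y`. -/
def IsGeodesicSegment {X : Type*} [MetricSpace X] (S : Set X) (x y : X) : Prop :=
  ∃ (a b : ℝ) (γ : ℝ → X), a ≤ b ∧ γ a = x ∧ γ b = y ∧
    (∀ s ∈ Set.Icc a b, ∀ t ∈ Set.Icc a b, dist (γ s) (γ t) = |s - t|) ∧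
    S = γ '' Set.Icc a b

/-- A metric space is geodesic if every two points are joined by a geodesic segment. -/
def GeodesicSpace (X : Type*) [MetricSpace X] : Prop :=
  ∀ x y : X, ∃ S : Set X, IsGeodesicSegment S x y

/-- `(X,d,W)` is a W-hyperbolic space: the convexity mapping `W` satisfies
axioms (W1)-(W4) for all parameters in `[0,1]`. -/
def IsWHyperbolic {X : Type*} [MetricSpace X] (W : X → X → ℝ → X) : Prop :=
  (∀ x y z : X, ∀ l ∈ Set.Icc (0:ℝ) 1,
      dist z (W x y l) ≤ (1 - l) * dist z x + l * dist z y) ∧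
  (∀ x y : X, ∀ l ∈ Set.Icc (0:ℝ) 1, ∀ l' ∈ Set.Icc (0:ℝ) 1,
      dist (W x y l) (W x y l') = |l - l'| * dist x y) ∧
  (∀ x y : X, ∀ l ∈ Set.Icc (0:ℝ) 1, W x y l = W y x (1 - l)) ∧
  (∀ x y z w : X, ∀ l ∈ Set.Icc (0:ℝ) 1,
      dist (W x z l) (W y w l) ≤ (1 - l) * dist x y + l * dist z w)

/-- An affinely reparametrized geodesic on `[a,b]`: a constant path or a geodesic
precomposed with an affine homeomorphism, i.e. `d(γ s, γ t) = c|s-t|` for some `c ≥ 0`. -/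
def AffinelyReparamGeodesic {X : Type*} [MetricSpace X] (γ : ℝ → X) (a b : ℝ) : Prop :=
  ∃ c : ℝ, 0 ≤ c ∧ ∀ s ∈ Set.Icc a b, ∀ t ∈ Set.Icc a b, dist (γ s) (γ t) = c * |s - t|

/-- A Busemann space: a geodesic space in which the distance between any two
affinely reparametrized geodesics is a convex function. -/
def IsBusemann (X : Type*) [MetricSpace X] : Prop :=
  GeodesicSpace X ∧
  ∀ (γ γ' : ℝ → X) (a b c d : ℝ), AffinelyReparamGeodesic γ a b →
    AffinelyReparamGeodesic γ' c d →
    ConvexOn ℝ (Set.Icc a b ×ˢ Set.Icc c d) (fun p : ℝ × ℝ => dist (γ p.1) (γ' p.2))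

lemma geodesic_reparam {X : Type*} [MetricSpace X] (hG : GeodesicSpace X) (x y : X) :
    ∃ γ : ℝ → X, γ 0 = x ∧ γ (dist x y) = y ∧
      ∀ s ∈ Set.Icc (0:ℝ) (dist x y), ∀ t ∈ Set.Icc (0:ℝ) (dist x y),
        dist (γ s) (γ t) = |s - t| := by
  obtain ⟨S, a, b, γ, hab, hga, hgb, hiso, -⟩ := hG x y
  have hlen : b - a = dist x y := by
    have h := hiso a ⟨le_refl a, hab⟩ b ⟨hab, le_refl b⟩
    rw [hgb, hga] at h
    rw [h, abs_of_nonpos (by linarith)]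
    ring
  refine ⟨fun t => γ (a + t), by simpa using hga, by rw [← hlen]; simpa using hgb, ?_⟩
  intro s hs t ht
  have h := hiso (a + s) ⟨by linarith [hs.1], by linarith [hs.2]⟩
    (a + t) ⟨by linarith [ht.1], by linarith [ht.2]⟩
  simp only [h]
  congr 1
  ring

lemma geodesic_through {X : Type*} [MetricSpace X] (hG : GeodesicSpace X)
    (b c d : X) (hcol : dist b c + dist c d = dist b d) :
    ∃ γ : ℝ → X, γ 0 = b ∧ γ (dist b c) = c ∧ γ (dist b d) = d ∧
      ∀ s ∈ Set.Icc (0:ℝ) (dist b d), ∀ t ∈ Set.Icc (0:ℝ) (dist b d),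
        dist (γ s) (γ t) = |s - t| := by
  obtain ⟨γ1, h10, h11, h1iso⟩ := geodesic_reparam hG b c
  obtain ⟨γ2, h20, h21, h2iso⟩ := geodesic_reparam hG c d
  set u := dist b c with hu
  set v := dist c d with hv
  have hu0 : 0 ≤ u := dist_nonneg
  have hv0 : 0 ≤ v := dist_nonneg
  refine ⟨fun t => if t ≤ u then γ1 t else γ2 (t - u), by simp [hu0, h10], by simp [h11], ?_, ?_⟩
  · by_cases h : dist b d ≤ u
    · have hveq : v = 0 := by linarith [hcol]
      have hcd : c = d := by rwa [← dist_eq_zero, ← hv]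
      simp only [h, if_pos]
      have : dist b d = u := le_antisymm h (by rw [← hcol, hveq]; linarith)
      rw [this, h11, hcd]
    · simp only [h, if_neg, not_false_iff]
      have : dist b d - u = v := by linarith [hcol]
      rw [this, h21]
  · -- isometry
    have hbd : dist b d = u + v := hcol.symm
    have hmemγ1 : ∀ t, 0 ≤ t → t ≤ u → t ∈ Set.Icc (0:ℝ) u := fun t h1 h2 => ⟨h1, h2⟩
    have hdistb : ∀ t ∈ Set.Icc (0:ℝ) (dist b d),
        dist b ((fun t => if t ≤ u then γ1 t else γ2 (t - u)) t) = t := by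
      intro t ht
      by_cases h : t ≤ u
      · simp only [h, if_pos]
        have := h1iso 0 ⟨le_refl 0, hu0⟩ t ⟨ht.1, h⟩
        rw [h10] at this
        rw [this, abs_of_nonpos (by linarith [ht.1])]
        linarith
      · simp only [h, if_neg, not_false_iff]
        push_neg at h
        have htu : t - u ∈ Set.Icc (0:ℝ) v := ⟨by linarith, by linarith [ht.2, hbd]⟩
        have hcg : dist c (γ2 (t - u)) = t - u := by
          have := h2iso 0 ⟨le_refl 0, hv0⟩ (t - u) htu
          rw [h20] at this
          rw [this, abs_of_nonpos (by linarith [htu.1])]; ring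
        have hgd : dist (γ2 (t - u)) d = u + v - t := by
          have := h2iso (t - u) htu v ⟨hv0, le_refl v⟩
          rw [h21] at this
          rw [this, abs_of_nonpos (by linarith [htu.2])]; ring
        have hle : dist b (γ2 (t - u)) ≤ t := by
          calc dist b (γ2 (t - u)) ≤ dist b c + dist c (γ2 (t - u)) := dist_triangle _ _ _
            _ = t := by rw [hcg, ← hu]; ring
        have hge : t ≤ dist b (γ2 (t - u)) := by
          have := dist_triangle b (γ2 (t - u)) d
          rw [hgd, hbd] at this
          linarith
        linarith
    have aux : ∀ s ∈ Set.Icc (0:ℝ) (dist b d), ∀ t ∈ Set.Icc (0:ℝ) (dist b d), s ≤ t →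
        dist ((fun t => if t ≤ u then γ1 t else γ2 (t - u)) s)
          ((fun t => if t ≤ u then γ1 t else γ2 (t - u)) t) = t - s := by
      intro s hs t ht hst
      by_cases h1 : t ≤ u
      · have h2 : s ≤ u := le_trans hst h1
        simp only [h1, h2, if_pos]
        rw [h1iso s ⟨hs.1, h2⟩ t ⟨ht.1, h1⟩, abs_of_nonpos (by linarith)]; ring
      · by_cases h2 : s ≤ u
        · -- mixed case
          simp only [h1, h2, if_pos, if_neg, not_false_iff]
          push_neg at h1
          have hsc : dist (γ1 s) c = u - s := by
            have := h1iso s ⟨hs.1, h2⟩ u ⟨hu0, le_refl u⟩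
            rw [h11] at this
            rw [this, abs_of_nonpos (by linarith)]; ring
          have hcg : dist c (γ2 (t - u)) = t - u := by
            have htu : t - u ∈ Set.Icc (0:ℝ) v := ⟨by linarith, by linarith [ht.2, hcol]⟩
            have := h2iso 0 ⟨le_refl 0, hv0⟩ (t - u) htu
            rw [h20] at this
            rw [this, abs_of_nonpos (by linarith [htu.1])]; ring
          have hle : dist (γ1 s) (γ2 (t - u)) ≤ t - s := by
            calc dist (γ1 s) (γ2 (t - u)) ≤ dist (γ1 s) c + dist c (γ2 (t - u)) :=
                dist_triangle _ _ _
              _ = t - s := by rw [hsc, hcg]; ring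
          have hbs := hdistb s hs
          have hbt := hdistb t ht
          simp only [h2, if_pos] at hbs
          simp only [not_le.mpr h1, if_neg, not_false_iff] at hbt
          have hge : t - s ≤ dist (γ1 s) (γ2 (t - u)) := by
            have := dist_triangle b (γ1 s) (γ2 (t - u))
            rw [hbs] at this
            linarith
          linarith
        · push_neg at h1 h2
          simp only [not_le.mpr h1, not_le.mpr h2, if_neg, not_false_iff]
          have hsu : s - u ∈ Set.Icc (0:ℝ) v := ⟨by linarith, by linarith [hs.2, hcol]⟩
          have htu : t - u ∈ Set.Icc (0:ℝ) v := ⟨by linarith, by linarith [ht.2, hcol]⟩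
          rw [h2iso (s - u) hsu (t - u) htu, abs_of_nonpos (by linarith)]; ring
    intro s hs t ht
    rcases le_total s t with h | h
    · rw [aux s hs t ht h, abs_of_nonpos (by linarith)]; ring
    · rw [dist_comm, aux t ht s hs h, abs_of_nonneg (by linarith)]

lemma busemann_betweenness {X : Type*} [MetricSpace X] (hB : IsBusemann X)
    (a b c d : X) (h1 : dist a b + dist b c = dist a c)
    (h2 : dist b c + dist c d = dist b d) (hbc : 0 < dist b c) :
    dist a d = dist a b + dist b c + dist c d := by
  by_cases hcd : dist c d = 0
  · have hceq : c = d := dist_eq_zero.mp hcd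
    rw [← hceq]
    simp only [dist_self, add_zero]
    linarith
  · have hcd' : 0 < dist c d := lt_of_le_of_ne dist_nonneg (Ne.symm hcd)
    obtain ⟨γ, hg0, hg1, hg2, hgiso⟩ := geodesic_through hB.1 b c d h2
    have hL0 : 0 < dist b d := by linarith
    have huL : dist b c < dist b d := by linarith
    have haff1 : AffinelyReparamGeodesic (fun _ : ℝ => a) 0 0 :=
      ⟨0, le_refl 0, fun s _ t _ => by simp⟩
    have haff2 : AffinelyReparamGeodesic γ 0 (dist b d) :=
      ⟨1, zero_le_one, fun s hs t ht => by rw [one_mul]; exact hgiso s hs t ht⟩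
    have hconv := hB.2 (fun _ => a) γ 0 0 0 (dist b d) haff1 haff2
    set μ := dist b c / dist b d with hμ
    have hμ0 : 0 < μ := div_pos hbc hL0
    have hμ1 : μ < 1 := (div_lt_one hL0).mpr huL
    have hx : ((0:ℝ), (0:ℝ)) ∈ Set.Icc (0:ℝ) 0 ×ˢ Set.Icc (0:ℝ) (dist b d) :=
      ⟨⟨le_refl 0, le_refl 0⟩, ⟨le_refl 0, hL0.le⟩⟩
    have hy : ((0:ℝ), dist b d) ∈ Set.Icc (0:ℝ) 0 ×ˢ Set.Icc (0:ℝ) (dist b d) :=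
      ⟨⟨le_refl 0, le_refl 0⟩, ⟨hL0.le, le_refl _⟩⟩
    have hkey := hconv.2 hx hy (by linarith : (0:ℝ) ≤ 1 - μ) hμ0.le (by ring)
    have hpt : (1 - μ) • ((0:ℝ), (0:ℝ)) + μ • ((0:ℝ), dist b d) = ((0:ℝ), dist b c) := by
      simp [Prod.ext_iff, hμ]
      field_simp
    rw [hpt] at hkey
    simp only [hg0, hg1, hg2, smul_eq_mul] at hkey
    -- hkey : dist a c ≤ (1 - μ) * dist a b + μ * dist a d
    have hac : dist a c = dist a b + dist b c := by linarith
    have htri : dist a d ≤ dist a b + dist b c + dist c d := by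
      have := dist_triangle a c d
      linarith
    have hμL : μ * dist b d = dist b c := by rw [hμ]; exact div_mul_cancel₀ _ hL0.ne'
    have hge : dist a b + dist b d ≤ dist a d := by nlinarith [hkey, hac, hμL]
    linarith

theorem stmt14 {X : Type*} [MetricSpace X]
    (hBus : IsBusemann X) (W : X → X → ℝ → X) (hW : IsWHyperbolic W)
    (C : Set X) (hne : C.Nonempty)
    (T : X → X) (hTC : Set.MapsTo T C C)
    (l : ℝ) (hl : l ∈ Set.Ioo (0:ℝ) 1)
    (hT : ∀ x ∈ C, ∀ y ∈ C, dist (T x) (T y) ≤ dist (W x (T x) l) (W y (T y) l)) :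
    ∀ x ∈ C, ∀ m : ℕ, T^[m + 1] x = x → T x = x := by
  intro x hx m hper
  by_contra hne'
  have hlIcc : l ∈ Set.Icc (0:ℝ) 1 := ⟨hl.1.le, hl.2.le⟩
  set y : ℕ → X := fun i => T^[i] x with hy
  have hy0 : y 0 = x := rfl
  have hystep : ∀ i, y (i + 1) = T (y i) := fun i => Function.iterate_succ_apply' T i x
  have hyC : ∀ i, y i ∈ C := by
    intro i
    induction i with
    | zero => exact hx
    | succ n ih => rw [hystep]; exact hTC ih
  have hyper : ∀ i, y (i + (m + 1)) = y i := by
    intro i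
    show T^[i + (m+1)] x = T^[i] x
    rw [Function.iterate_add_apply, hper]
  set δ : ℕ → ℝ := fun i => dist (y i) (y (i + 1)) with hδdef
  -- the key inequality from λ-firm nonexpansiveness
  have hTkey : ∀ i, dist (y (i + 1)) (y (i + 2)) ≤
      dist (W (y i) (y (i + 1)) l) (W (y (i + 1)) (y (i + 2)) l) := by
    intro i
    have h2 : T (y i) = y (i + 1) := (hystep i).symm
    have h3 : T (y (i + 1)) = y (i + 2) := (hystep (i + 1)).symm
    have h := hT (y i) (hyC i) (y (i + 1)) (hyC (i + 1))
    rw [h2, h3] at h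
    exact h
  -- δ is nonincreasing
  have hdec : ∀ i, δ (i + 1) ≤ δ i := by
    intro i
    have h4 := hW.2.2.2 (y i) (y (i + 1)) (y (i + 1)) (y (i + 2)) l hlIcc
    have h := hTkey i
    have h' : δ (i + 1) ≤ (1 - l) * δ i + l * δ (i + 1) := by
      show dist (y (i+1)) (y (i+2)) ≤
        (1 - l) * dist (y i) (y (i+1)) + l * dist (y (i+1)) (y (i+2))
      linarith
    nlinarith [hl.2, h']
  have hmono : ∀ i j, i ≤ j → δ j ≤ δ i := by
    intro i j hij
    induction hij with
    | refl => exact le_refl _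
    | @step n h ih => exact le_trans (hdec n) ih
  have hperδ : ∀ i, δ (i + (m + 1)) = δ i := by
    intro i
    show dist (y (i + (m+1))) (y (i + (m+1) + 1)) = dist (y i) (y (i + 1))
    have he : i + (m + 1) + 1 = (i + 1) + (m + 1) := by ring
    rw [he, hyper i, hyper (i + 1)]
  have hperk : ∀ k, δ (k * (m + 1)) = δ 0 := by
    intro k
    induction k with
    | zero => simp
    | succ n ih => rw [Nat.succ_mul, hperδ, ih]
  have hconst : ∀ i, δ i = δ 0 := by
    intro i
    have h1 : δ i ≤ δ 0 := hmono 0 i (Nat.zero_le i)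
    have h2 : δ 0 ≤ δ i := by
      rw [← hperk i]
      exact hmono i (i * (m + 1)) (Nat.le_mul_of_pos_right i (Nat.succ_pos m))
    linarith
  set D := δ 0 with hD
  have hDpos : 0 < D := by
    have h1 : y (0 + 1) = T x := by rw [hystep 0, hy0]
    show (0:ℝ) < dist (y 0) (y (0 + 1))
    rw [h1, hy0, dist_pos]
    exact fun h => hne' h.symm
  have hδi : ∀ i, dist (y i) (y (i + 1)) = D := fun i => hconst i
  -- W points
  set w : ℕ → X := fun i => W (y i) (y (i + 1)) l with hw
  have hw1 : ∀ i, dist (y i) (w i) = l * D ∧ dist (w i) (y (i + 1)) = (1 - l) * D := by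
    intro i
    have ha := hW.1 (y i) (y (i + 1)) (y i) l hlIcc
    have hb := hW.1 (y i) (y (i + 1)) (y (i + 1)) l hlIcc
    rw [dist_self] at ha hb
    rw [hδi i] at ha
    rw [dist_comm (y (i + 1)) (y i), hδi i] at hb
    have htri := dist_triangle (y i) (W (y i) (y (i + 1)) l) (y (i + 1))
    rw [hδi i] at htri
    have hc : dist (W (y i) (y (i + 1)) l) (y (i + 1)) =
        dist (y (i + 1)) (W (y i) (y (i + 1)) l) := dist_comm _ _
    rw [hc] at htri
    constructor
    · show dist (y i) (W (y i) (y (i + 1)) l) = l * D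
      linarith
    · show dist (W (y i) (y (i + 1)) l) (y (i + 1)) = (1 - l) * D
      rw [hc]
      linarith
  have hww : ∀ i, dist (w i) (w (i + 1)) = D := by
    intro i
    have hle : dist (w i) (w (i + 1)) ≤ D := by
      have htri := dist_triangle (w i) (y (i + 1)) (w (i + 1))
      have h1 := (hw1 i).2
      have h2 := (hw1 (i + 1)).1
      calc dist (w i) (w (i+1)) ≤ dist (w i) (y (i+1)) + dist (y (i+1)) (w (i+1)) := htri
        _ = D := by rw [h1, h2]; ring
    have hge : D ≤ dist (w i) (w (i + 1)) := by
      calc D = dist (y (i + 1)) (y (i + 2)) := (hδi (i+1)).symm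
        _ ≤ dist (W (y i) (y (i+1)) l) (W (y (i+1)) (y (i+2)) l) := hTkey i
        _ = dist (w i) (w (i + 1)) := rfl
    linarith
  -- the chain of points
  set p : ℕ → X := fun j => if j % 2 = 0 then y (j / 2) else w (j / 2) with hp
  have hp2 : ∀ i, p (2 * i) = y i := by
    intro i
    show (if (2 * i) % 2 = 0 then y ((2 * i) / 2) else w ((2 * i) / 2)) = y i
    rw [if_pos (by omega)]
    congr 1
    omega
  have hp21 : ∀ i, p (2 * i + 1) = w i := by
    intro i
    show (if (2 * i + 1) % 2 = 0 then y ((2 * i + 1) / 2) else w ((2 * i + 1) / 2)) = w i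
    rw [if_neg (by omega)]
    congr 1
    omega
  have hstepe : ∀ i, dist (p (2 * i)) (p (2 * i + 1)) = l * D := by
    intro i
    rw [hp2, hp21]
    exact (hw1 i).1
  have hstepo : ∀ i, dist (p (2 * i + 1)) (p (2 * i + 2)) = (1 - l) * D := by
    intro i
    have he : 2 * i + 2 = 2 * (i + 1) := by ring
    rw [he, hp21, hp2]
    exact (hw1 i).2
  have hpos : ∀ j, 0 < dist (p j) (p (j + 1)) := by
    intro j
    rcases Nat.even_or_odd j with ⟨i, hi⟩ | ⟨i, hi⟩
    · subst hi
      rw [show i + i = 2 * i by ring, hstepe]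
      exact mul_pos hl.1 hDpos
    · subst hi
      rw [show 2 * i + 1 + 1 = 2 * i + 2 from rfl, hstepo]
      exact mul_pos (by linarith [hl.2]) hDpos
  have hcoll : ∀ j, dist (p j) (p (j + 1)) + dist (p (j + 1)) (p (j + 2)) =
      dist (p j) (p (j + 2)) := by
    intro j
    rcases Nat.even_or_odd j with ⟨i, hi⟩ | ⟨i, hi⟩
    · subst hi
      have e3 : 2 * i + 2 = 2 * (i + 1) := by ring
      rw [show i + i = 2 * i by ring, hstepe i, hstepo i, e3, hp2 i, hp2 (i + 1), hδi i]
      ring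
    · subst hi
      have e1 : 2 * i + 1 + 1 = 2 * i + 2 := by omega
      have e2 : 2 * i + 1 + 2 = 2 * (i + 1) + 1 := by omega
      have e3 : 2 * i + 2 = 2 * (i + 1) := by omega
      rw [e1, e2, hstepo i, e3, hstepe (i + 1), hp21 i, hp21 (i + 1), hww i]
      ring
  -- chaining via the betweenness property
  have hchain : ∀ j, dist (p 0) (p (j + 1)) = dist (p 0) (p j) + dist (p j) (p (j + 1)) := by
    intro j
    induction j with
    | zero => rw [dist_self]; ring
    | succ n ih =>
      have hb := busemann_betweenness hBus (p 0) (p n) (p (n + 1)) (p (n + 2))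
        ih.symm (hcoll n) (hpos n)
      show dist (p 0) (p (n + 2)) = dist (p 0) (p (n + 1)) + dist (p (n + 1)) (p (n + 2))
      rw [hb, ih]
  have htotal : ∀ i, dist (p 0) (p (2 * i)) = i * D := by
    intro i
    induction i with
    | zero =>
      rw [show (2 * 0 : ℕ) = 0 from rfl, dist_self]
      simp
    | succ n ih =>
      have e0 : 2 * (n + 1) = 2 * n + 1 + 1 := by ring
      rw [e0, hchain (2 * n + 1)]
      have e1 : 2 * n + 1 + 1 = 2 * n + 2 := by omega
      rw [e1, hstepo n, hchain (2 * n), hstepe n, ih]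
      push_cast
      ring
  have hfin := htotal (m + 1)
  have hpp : p (2 * (m + 1)) = p 0 := by
    rw [hp2]
    have hp0 : p 0 = y 0 := by
      show (if (0:ℕ) % 2 = 0 then y (0 / 2) else w (0 / 2)) = y 0
      rw [if_pos (by omega)]
    rw [hp0]
    simpa using hyper 0
  rw [hpp, dist_self] at hfin
  have hgt : (0:ℝ) < (↑(m + 1) : ℝ) * D := by
    apply mul_pos _ hDpos
    positivity
  rw [← hfin] at hgt
  exact lt_irrefl 0 hgt
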